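/- Let R be a finite commutative chain ring with maximal ideal γR, nilpotency index ν (the least positive integer with γ^ν = 0) and residue field of size q = |R/γR|, and choose the representatives a_i = γ^{ν−i} for i = 0, …, ν (so t = ν and a_ν = 1). Let C be a linear code of length n over R and let χ be a generating character of R. Then swe_{C⊥}(x) = (1/|C|) · swe_C(Sx), where S = (s_{ij}) is the (ν+1)×(ν+1) matrix with rows and columns indexed by {0,…,ν} and, for all i, j, s_{ij} = Σ_{r ∈ γ^{ν−j}R^×} χ(r γ^{ν−i}) = 1 if j = 0; = q^j − q^{j−1} if 1 ≤ j ≤ ν − i; = −q^{ν−i} if j = ν + 1 − i; and = 0 otherwise. Here γ^{ν−j}R^× = {γ^{ν−j}u : u a unit of R}. -/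

import Mathlib

noncomputable section
open scoped BigOperators

/-- The dual of a linear code `C ⊆ Rⁿ` with respect to the standard inner
product `u·v = ∑ ℓ, u ℓ * v ℓ`. -/
def dualCode {R : Type*} [CommRing R] {n : ℕ} (C : Submodule R (Fin n → R)) :
    Submodule R (Fin n → R) where
  carrier := {v | ∀ u ∈ C, ∑ ℓ, u ℓ * v ℓ = 0}
  add_mem' := by
    intro v w hv hw u hu
    simp only [Set.mem_setOf_eq] at *
    have h1 := hv u hu
    have h2 := hw u hu
    simp only [Pi.add_apply, mul_add, Finset.sum_add_distrib, h1, h2, add_zero]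
  zero_mem' := by
    intro u hu
    simp
  smul_mem' := by
    intro c v hv u hu
    simp only [Set.mem_setOf_eq] at *
    have h := hv u hu
    have : ∑ ℓ, u ℓ * (c • v) ℓ = c * ∑ ℓ, u ℓ * v ℓ := by
      rw [Finset.mul_sum]
      exact Finset.sum_congr rfl fun ℓ _ => by
        simp only [Pi.smul_apply, smul_eq_mul]; ring
    rw [this, h, mul_zero]

/-- A finite commutative ring is Frobenius iff `|C|·|C⊥| = |R|ⁿ` for every
linear code `C` of every length `n` over `R`. -/
def IsFrobeniusRing (R : Type*) [CommRing R] [Fintype R] : Prop :=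
  ∀ (n : ℕ) (C : Submodule R (Fin n → R)),
    Nat.card C * Nat.card (dualCode C) = Fintype.card R ^ n

open MvPolynomial Classical

/-- The symmetrized weight composition `swc_i(c) = |{ℓ : c_ℓ R = a_i R}|`. -/
def swc {R : Type*} [CommRing R] {t n : ℕ} (a : Fin (t + 1) → R)
    (c : Fin n → R) (i : Fin (t + 1)) : ℕ :=
  Nat.card {ℓ : Fin n // Ideal.span {c ℓ} = Ideal.span {a i}}

/-- The symmetrized weight enumerator
`swe_C(x₀, …, x_t) = ∑_{c ∈ C} ∏ᵢ xᵢ^(swcᵢ(c))`, with complex coefficients. -/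
def swe {R : Type*} [CommRing R] [Fintype R] {t n : ℕ} (a : Fin (t + 1) → R)
    (C : Submodule R (Fin n → R)) : MvPolynomial (Fin (t + 1)) ℂ :=
  haveI : Fintype C := Fintype.ofFinite C
  ∑ c : C, ∏ i, X i ^ swc a (c : Fin n → R) i


/- ====================  auxiliary lemmas  ==================== -/

section ChainAux
set_option linter.unusedSectionVars false
set_option linter.unusedVariables false
variable {R : Type*} [CommRing R] [Fintype R] [IsLocalRing R] {γ : R} {ν : ℕ}

lemma pow_ne_zero_of_lt (hmin : ∀ m : ℕ, 0 < m → γ ^ m = 0 → ν ≤ m)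
    {m : ℕ} (hm : m < ν) : γ ^ m ≠ 0 := by
  intro h
  rcases Nat.eq_zero_or_pos m with rfl | hpos
  · simp at h
  · exact absurd (hmin m hpos h) (not_le.mpr hm)

/-- every element is γ^m * unit with m ≤ ν -/
lemma exists_rep (hγ : IsLocalRing.maximalIdeal R = Ideal.span {γ})
    (hγν : γ ^ ν = 0) (x : R) : ∃ m ≤ ν, ∃ u : Rˣ, x = γ ^ m * u := by
  rcases eq_or_ne x 0 with rfl | hx
  · exact ⟨ν, le_rfl, 1, by simp [hγν]⟩
  · -- m := greatest with γ^m ∣ x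
    set P : ℕ → Prop := fun m => γ ^ m ∣ x with hP
    have h0 : P 0 := by simp [hP]
    set m := Nat.findGreatest P ν with hm
    have hmν : m ≤ ν := Nat.findGreatest_le ν
    have hdvd : P m := Nat.findGreatest_spec (Nat.zero_le ν) h0
    obtain ⟨y, hy⟩ := hdvd
    have hyu : IsUnit y := by
      by_contra hny
      have hymem : y ∈ IsLocalRing.maximalIdeal R := hny
      rw [hγ, Ideal.mem_span_singleton] at hymem
      obtain ⟨z, hz⟩ := hymem
      have hmlt : m < ν := by
        rcases lt_or_eq_of_le hmν with h | h
        · exact h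
        · exfalso; exact hx (by rw [hy, h, hγν, zero_mul])
      have : P (m + 1) := ⟨z, by rw [hy, hz]; ring⟩
      exact Nat.findGreatest_is_greatest (Nat.lt_succ_self m) (by omega) this
    obtain ⟨u, hu⟩ := hyu
    exact ⟨m, hmν, u, by rw [hy, hu]⟩

/-- divisibility of powers -/
lemma pow_dvd_pow_iff_le (hγ : IsLocalRing.maximalIdeal R = Ideal.span {γ})
    (hmin : ∀ m : ℕ, 0 < m → γ ^ m = 0 → ν ≤ m)
    {k m : ℕ} (hk : k < ν) : γ ^ m ∣ γ ^ k ↔ m ≤ k := by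
  constructor
  · intro ⟨y, hy⟩
    by_contra hlt
    push_neg at hlt
    have : γ ^ k * (1 - γ ^ (m - k) * y) = 0 := by
      have : γ ^ m = γ ^ k * γ ^ (m - k) := by rw [← pow_add]; congr 1; omega
      rw [mul_sub, mul_one, ← mul_assoc, ← this, ← hy, sub_self]
    have hunit : IsUnit (1 - γ ^ (m - k) * y) := by
      apply IsLocalRing.isUnit_one_sub_self_of_mem_nonunits
      have : γ ^ (m - k) * y ∈ IsLocalRing.maximalIdeal R := by
        rw [hγ, Ideal.mem_span_singleton]
        exact Dvd.dvd.mul_right (dvd_pow_self γ (by omega)) y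
      exact this
    have : γ ^ k = 0 := by
      obtain ⟨u, hu⟩ := hunit
      calc γ ^ k = γ ^ k * (1 - γ ^ (m-k) * y) * u.inv := by
            rw [← hu]; rw [mul_assoc, u.val_inv, mul_one]
        _ = 0 := by rw [this, zero_mul]
    exact pow_ne_zero_of_lt hmin hk this
  · intro h
    exact pow_dvd_pow γ h

/-- the valuation: largest m ≤ ν with γ^m ∣ x -/
noncomputable def kOf (γ : R) (ν : ℕ) (x : R) : ℕ :=
  Nat.findGreatest (fun m => γ ^ m ∣ x) ν

lemma kOf_le (x : R) : kOf γ ν x ≤ ν := Nat.findGreatest_le ν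

lemma kOf_dvd (x : R) : γ ^ kOf γ ν x ∣ x := by
  have h0 : γ ^ 0 ∣ x := by rw [pow_zero]; exact one_dvd x
  exact Nat.findGreatest_spec (P := fun m => γ ^ m ∣ x) (Nat.zero_le ν) h0

lemma le_kOf_of_dvd {m : ℕ} (hm : m ≤ ν) {x : R} (h : γ ^ m ∣ x) : m ≤ kOf γ ν x :=
  Nat.le_findGreatest hm h

/-- equal exponents from mutual divisibility -/
lemma pow_exp_eq (hγ : IsLocalRing.maximalIdeal R = Ideal.span {γ})
    (hγν : γ ^ ν = 0)
    (hmin : ∀ m : ℕ, 0 < m → γ ^ m = 0 → ν ≤ m)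
    {k m : ℕ} (hk : k ≤ ν) (hm : m ≤ ν)
    (h1 : γ ^ m ∣ γ ^ k) (h2 : γ ^ k ∣ γ ^ m) : k = m := by
  rcases lt_or_eq_of_le hk with hk' | rfl
  · rcases lt_or_eq_of_le hm with hm' | rfl
    · have := (pow_dvd_pow_iff_le hγ hmin hk').mp h1
      have := (pow_dvd_pow_iff_le hγ hmin hm').mp h2
      omega
    · exfalso
      obtain ⟨y, hy⟩ := h1
      rw [hγν, zero_mul] at hy
      exact pow_ne_zero_of_lt hmin hk' hy
  · rcases lt_or_eq_of_le hm with hm' | rfl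
    · exfalso
      obtain ⟨y, hy⟩ := h2
      rw [hγν, zero_mul] at hy
      exact pow_ne_zero_of_lt hmin hm' hy
    · rfl

lemma kOf_spec (hγ : IsLocalRing.maximalIdeal R = Ideal.span {γ})
    (hγν : γ ^ ν = 0)
    (hmin : ∀ m : ℕ, 0 < m → γ ^ m = 0 → ν ≤ m)
    (x : R) : ∃ u : Rˣ, x = γ ^ kOf γ ν x * u := by
  obtain ⟨m, hm, u, hu⟩ := exists_rep hγ hγν x
  have h1 : m ≤ kOf γ ν x := le_kOf_of_dvd hm ⟨u, hu⟩
  have h2 : γ ^ kOf γ ν x ∣ γ ^ m := by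
    set K := kOf γ ν x with hK
    have hd := kOf_dvd (γ := γ) (ν := ν) x
    rw [← hK, hu] at hd
    exact (Units.dvd_mul_right).mp hd
  have : kOf γ ν x = m :=
    pow_exp_eq hγ hγν hmin (kOf_le x) hm
      (pow_dvd_pow γ h1) h2
  rw [this]; exact ⟨u, hu⟩

lemma kOf_unique (hγ : IsLocalRing.maximalIdeal R = Ideal.span {γ})
    (hγν : γ ^ ν = 0)
    (hmin : ∀ m : ℕ, 0 < m → γ ^ m = 0 → ν ≤ m)
    {x : R} {m : ℕ} (hm : m ≤ ν) (h : ∃ u : Rˣ, x = γ ^ m * u) :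
    kOf γ ν x = m := by
  obtain ⟨u, hu⟩ := h
  set K := kOf γ ν x with hK
  obtain ⟨w, hw⟩ := kOf_spec hγ hγν hmin x
  rw [← hK] at hw
  have hKle : K ≤ ν := hK ▸ kOf_le x
  apply pow_exp_eq hγ hγν hmin hKle hm
  · refine ⟨↑u * ↑w⁻¹, ?_⟩
    have h1 : γ ^ K * ↑w * ↑w⁻¹ = γ ^ K := by
      rw [mul_assoc, Units.mul_inv, mul_one]
    rw [← h1, ← hw, hu]; ring
  · refine ⟨↑w * ↑u⁻¹, ?_⟩
    have h1 : γ ^ m * ↑u * ↑u⁻¹ = γ ^ m := by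
      rw [mul_assoc, Units.mul_inv, mul_one]
    rw [← h1, ← hu, hw]; ring

/-- membership in power ideals via kOf -/
lemma pow_dvd_iff_le_kOf (hγ : IsLocalRing.maximalIdeal R = Ideal.span {γ})
    {m : ℕ} (hm : m ≤ ν) (x : R) : γ ^ m ∣ x ↔ m ≤ kOf γ ν x :=
  ⟨le_kOf_of_dvd hm, fun h => dvd_trans (pow_dvd_pow γ h) (kOf_dvd x)⟩

lemma kOf_pow (hγ : IsLocalRing.maximalIdeal R = Ideal.span {γ})
    (hγν : γ ^ ν = 0)
    (hmin : ∀ m : ℕ, 0 < m → γ ^ m = 0 → ν ≤ m)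
    {m : ℕ} (hm : m ≤ ν) : kOf γ ν (γ ^ m) = m :=
  kOf_unique hγ hγν hmin hm ⟨1, by simp⟩

/-- span characterization -/
lemma span_eq_iff_kOf (hγ : IsLocalRing.maximalIdeal R = Ideal.span {γ})
    (hγν : γ ^ ν = 0)
    (hmin : ∀ m : ℕ, 0 < m → γ ^ m = 0 → ν ≤ m)
    {m : ℕ} (hm : m ≤ ν) (x : R) :
    Ideal.span {x} = Ideal.span {γ ^ m} ↔ kOf γ ν x = m := by
  constructor
  · intro h
    have h1 : γ ^ m ∣ x := Ideal.span_singleton_le_span_singleton.mp h.le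
    have h2 : x ∣ γ ^ m := Ideal.span_singleton_le_span_singleton.mp h.ge
    have h3 : m ≤ kOf γ ν x := le_kOf_of_dvd hm h1
    apply pow_exp_eq hγ hγν hmin (kOf_le x) hm
    · exact pow_dvd_pow γ h3
    · exact dvd_trans (kOf_dvd x) h2
  · rintro rfl
    set K := kOf γ ν x with hK
    obtain ⟨w, hw⟩ := kOf_spec hγ hγν hmin x
    rw [← hK] at hw
    apply le_antisymm
    · exact Ideal.span_singleton_le_span_singleton.mpr (hK ▸ kOf_dvd x)
    · apply Ideal.span_singleton_le_span_singleton.mpr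
      refine ⟨↑w⁻¹, ?_⟩
      rw [hw, mul_assoc, Units.mul_inv, mul_one]

/-- zero annihilation: c * γ^m = 0 iff ν ≤ kOf c + m -/
lemma mul_pow_eq_zero_iff (hγ : IsLocalRing.maximalIdeal R = Ideal.span {γ})
    (hγν : γ ^ ν = 0)
    (hmin : ∀ m : ℕ, 0 < m → γ ^ m = 0 → ν ≤ m)
    (c : R) (m : ℕ) : c * γ ^ m = 0 ↔ ν ≤ kOf γ ν c + m := by
  obtain ⟨u, hu⟩ := kOf_spec hγ hγν hmin c
  constructor
  · intro h
    rw [hu] at h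
    have : γ ^ (kOf γ ν c + m) = 0 := by
      have : (γ ^ kOf γ ν c * ↑u * γ ^ m) * ↑u⁻¹ = γ ^ (kOf γ ν c + m) := by
        rw [pow_add]; push_cast; rw [mul_right_comm (γ ^ kOf γ ν c) (↑u) (γ ^ m), Units.mul_inv_cancel_right]
      rw [← this, h, zero_mul]
    by_contra hlt
    exact pow_ne_zero_of_lt hmin (by omega) this
  · intro h
    rw [hu]
    have : γ ^ kOf γ ν c * γ ^ m = 0 := by
      have : γ ^ (kOf γ ν c + m) = 0 := by
        have : γ ^ (kOf γ ν c + m) = γ ^ ν * γ ^ (kOf γ ν c + m - ν) := by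
          rw [← pow_add]; congr 1; omega
        rw [this, hγν, zero_mul]
      rwa [pow_add] at this
    calc γ ^ kOf γ ν c * ↑u * γ ^ m = (γ ^ kOf γ ν c * γ ^ m) * ↑u := by ring
      _ = 0 := by rw [this, zero_mul]

variable (hγ : IsLocalRing.maximalIdeal R = Ideal.span {γ})
    (hγν : γ ^ ν = 0)
    (hmin : ∀ m : ℕ, 0 < m → γ ^ m = 0 → ν ≤ m)

include hγ hγν hmin in
lemma ker_toSpan {m : ℕ} (hm : m ≤ ν) :
    LinearMap.ker (LinearMap.toSpanSingleton R R (γ ^ m)) = Ideal.span {γ ^ (ν - m)} := by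
  ext r
  rw [LinearMap.mem_ker, LinearMap.toSpanSingleton_apply, Ideal.mem_span_singleton,
    smul_eq_mul, mul_pow_eq_zero_iff hγ hγν hmin r m,
    pow_dvd_iff_le_kOf hγ (by omega : ν - m ≤ ν) r]
  omega

include hγ hγν hmin in
lemma card_mul {m : ℕ} (hm : m ≤ ν) :
    Nat.card R = Nat.card (Ideal.span {γ ^ (ν - m)} : Ideal R) *
      Nat.card (Ideal.span {γ ^ m} : Ideal R) := by
  set f := LinearMap.toSpanSingleton R R (γ ^ m)
  have h1 : Nat.card R = Nat.card (LinearMap.ker f) * Nat.card (R ⧸ LinearMap.ker f) :=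
    Submodule.card_eq_card_quotient_mul_card _
  have h2 : Nat.card (R ⧸ LinearMap.ker f) = Nat.card (Ideal.span {γ ^ m} : Ideal R) := by
    rw [Nat.card_congr f.quotKerEquivRange.toEquiv, ← LinearMap.span_singleton_eq_range]
  have h3 : (LinearMap.ker f : Submodule R R) = Ideal.span {γ ^ (ν - m)} :=
    ker_toSpan hγ hγν hmin hm
  rw [h1, h2, h3]

include hγ hγν hmin in
lemma card_step (hν : 0 < ν) {m : ℕ} (hm : m < ν) :
    Nat.card (Ideal.span {γ ^ m} : Ideal R) =
      Nat.card (Ideal.span {γ ^ (ν - 1)} : Ideal R) *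
        Nat.card (Ideal.span {γ ^ (m + 1)} : Ideal R) := by
  set p : Submodule R R := Ideal.span {γ ^ m}
  set f := (LinearMap.toSpanSingleton R R γ).domRestrict p
  have h1 : Nat.card p = Nat.card (LinearMap.ker f) * Nat.card (p ⧸ LinearMap.ker f) :=
    Submodule.card_eq_card_quotient_mul_card _
  have hker0 : LinearMap.ker (LinearMap.toSpanSingleton R R γ) = Ideal.span {γ ^ (ν - 1)} := by
    have := ker_toSpan hγ hγν hmin (m := 1) (by omega)
    rwa [pow_one] at this
  have hle : Ideal.span {γ ^ (ν - 1)} ≤ p := by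
    apply Ideal.span_singleton_le_span_singleton.mpr
    exact pow_dvd_pow γ (by omega)
  have h2 : Nat.card (LinearMap.ker f) =
      Nat.card (Ideal.span {γ ^ (ν - 1)} : Ideal R) := by
    rw [LinearMap.ker_domRestrict, hker0]
    exact Nat.card_congr (Submodule.comapSubtypeEquivOfLe hle).toEquiv
  have h3 : Nat.card (p ⧸ LinearMap.ker f) =
      Nat.card (Ideal.span {γ ^ (m + 1)} : Ideal R) := by
    rw [Nat.card_congr f.quotKerEquivRange.toEquiv]
    have hr : LinearMap.range f = Ideal.span {γ ^ (m + 1)} := by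
      rw [LinearMap.range_domRestrict]
      show Submodule.map _ (Submodule.span R {γ ^ m}) = _
      rw [Submodule.map_span, Set.image_singleton, LinearMap.toSpanSingleton_apply,
        smul_eq_mul, ← pow_succ]
    rw [hr]
  rw [h1, h2, h3]

include hγν in
lemma card_nu : Nat.card (Ideal.span {γ ^ ν} : Ideal R) = 1 := by
  rw [hγν]
  have : (Ideal.span {(0 : R)} : Ideal R) = ⊥ := Ideal.span_singleton_eq_bot.mpr rfl
  rw [this]
  exact Nat.card_unique

include hγ hγν hmin in
lemma card_numinus1 (hν : 0 < ν) {q : ℕ}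
    (hq : q = Nat.card (R ⧸ IsLocalRing.maximalIdeal R)) :
    Nat.card (Ideal.span {γ ^ (ν - 1)} : Ideal R) = q := by
  have h1 : Nat.card R = Nat.card (Ideal.span {γ ^ 1} : Ideal R) * q := by
    rw [hq, hγ]
    have := Submodule.card_eq_card_quotient_mul_card (Ideal.span {γ} : Ideal R)
    rw [pow_one]
    convert this using 3 <;> rfl
  have h2 := card_mul hγ hγν hmin (m := 1) (by omega)
  have hpos : 0 < Nat.card (Ideal.span {γ ^ 1} : Ideal R) :=
    Nat.card_pos
  have : Nat.card (Ideal.span {γ ^ 1} : Ideal R) * q =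
      Nat.card (Ideal.span {γ ^ 1} : Ideal R) *
        Nat.card (Ideal.span {γ ^ (ν - 1)} : Ideal R) := by
    rw [← h1, h2]; ring
  exact (Nat.eq_of_mul_eq_mul_left hpos this).symm

include hγ hγν hmin in
lemma card_pow_span (hν : 0 < ν) {q : ℕ}
    (hq : q = Nat.card (R ⧸ IsLocalRing.maximalIdeal R))
    {m : ℕ} (hm : m ≤ ν) :
    Nat.card (Ideal.span {γ ^ m} : Ideal R) = q ^ (ν - m) := by
  have key : ∀ d m : ℕ, m + d = ν →
      Nat.card (Ideal.span {γ ^ m} : Ideal R) = q ^ d := by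
    intro d
    induction d with
    | zero => intro m hm'; rw [Nat.add_zero] at hm'; subst hm'; rw [card_nu hγν, pow_zero]
    | succ d ih =>
      intro m hm'
      have := card_step hγ hγν hmin hν (m := m) (by omega)
      rw [this, ih (m + 1) (by omega), card_numinus1 hγ hγν hmin hν hq, pow_succ]
      ring
  have := key (ν - m) m (by omega)
  exact this
variable (χ : AddChar R ℂ)

/-- character sum over an ideal span {γ^m} -/
lemma char_sum_span (hχ : ∀ I : Ideal R, (∀ x ∈ I, χ x = 1) → I = ⊥)
    (c : R) (m : ℕ) :
    ∑ x ∈ Finset.univ.filter (fun x => x ∈ Ideal.span {γ ^ m}), χ (c * x) =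
      if c * γ ^ m = 0 then (Nat.card (Ideal.span {γ ^ m} : Ideal R) : ℂ) else 0 := by
  set I : Ideal R := Ideal.span {γ ^ m} with hI
  have hconv : ∑ x ∈ Finset.univ.filter (fun x => x ∈ I), χ (c * x)
      = ∑ x : I, χ (c * x) := by
    rw [Finset.sum_subtype (Finset.univ.filter (fun x => x ∈ I))
      (p := fun x => x ∈ I) (by simp) (fun x => χ (c * x))]
  rw [hconv]
  set ψ : AddChar I ℂ :=
    χ.compAddMonoidHom ((AddMonoidHom.mulLeft c).comp I.subtype.toAddMonoidHom) with hψ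
  have hψa : ∀ x : I, ψ x = χ (c * x) := fun x => rfl
  have hsum : ∑ x : I, χ (c * ↑x) = ∑ x : I, ψ x := by
    exact Finset.sum_congr rfl fun x _ => (hψa x).symm
  rw [hsum, AddChar.sum_eq_ite ψ]
  have hcard : (Fintype.card I : ℂ) = (Nat.card I : ℂ) := by
    rw [Nat.card_eq_fintype_card]
  have hcond : ψ = 0 ↔ c * γ ^ m = 0 := by
    rw [AddChar.eq_zero_iff]
    constructor
    · intro h
      have : Ideal.span {c * γ ^ m} = ⊥ := by
        apply hχ
        intro y hy
        rw [Ideal.mem_span_singleton] at hy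
        obtain ⟨t, rfl⟩ := hy
        have hmem : γ ^ m * t ∈ I := Ideal.mul_mem_right t _ (Ideal.subset_span rfl)
        have := h ⟨γ ^ m * t, hmem⟩
        rw [hψa] at this
        calc χ (c * γ ^ m * t) = χ (c * (γ ^ m * t)) := by ring_nf
          _ = 1 := this
      exact Ideal.span_singleton_eq_bot.mp this
    · intro h x
      rw [hψa]
      obtain ⟨t, ht⟩ := Ideal.mem_span_singleton.mp x.2
      rw [ht, ← mul_assoc, h, zero_mul, AddChar.map_zero_eq_one]
  split_ifs with h1 h2 h2
  · exact hcard
  · exact absurd (hcond.mp h1) h2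
  · exact absurd (hcond.mpr h2) h1
  · rfl

section T
variable (hγ : IsLocalRing.maximalIdeal R = Ideal.span {γ})
    (hγν : γ ^ ν = 0)
    (hmin : ∀ m : ℕ, 0 < m → γ ^ m = 0 → ν ≤ m)
    (hν : 0 < ν) {q : ℕ}
    (hq : q = Nat.card (R ⧸ IsLocalRing.maximalIdeal R))
    (hχ : ∀ I : Ideal R, (∀ x ∈ I, χ x = 1) → I = ⊥)

include hγ hγν hmin hν hq hχ in
lemma char_sum_T (c : R) {j : ℕ} (hj : j ≤ ν) :
    ∑ d ∈ Finset.univ.filter (fun d => kOf γ ν d = ν - j), χ (c * d) =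
      (if j = 0 then 1
       else if j ≤ ν - (ν - kOf γ ν c) then (q : ℂ) ^ j - (q : ℂ) ^ (j - 1)
       else if j = ν + 1 - (ν - kOf γ ν c) then -(q : ℂ) ^ (ν - (ν - kOf γ ν c))
       else 0) := by
  set k := kOf γ ν c with hk
  have hkν : k ≤ ν := kOf_le c
  rcases Nat.eq_zero_or_pos j with rfl | hjpos
  · -- T 0 = {0}
    have hset : Finset.univ.filter (fun d => kOf γ ν d = ν - 0) = {(0 : R)} := by
      ext d
      simp only [Finset.mem_filter, Finset.mem_univ, true_and, Finset.mem_singleton]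
      constructor
      · intro h
        have : γ ^ ν ∣ d := (pow_dvd_iff_le_kOf hγ le_rfl d).mpr (by omega)
        rwa [hγν, zero_dvd_iff] at this
      · rintro rfl
        have h1 : γ ^ ν ∣ (0 : R) := dvd_zero _
        have := (pow_dvd_iff_le_kOf hγ le_rfl (0 : R)).mp h1
        have := kOf_le (γ := γ) (ν := ν) (0 : R)
        omega
    rw [hset]
    simp
  · -- j ≥ 1
    have hsplit : Finset.univ.filter (fun d => kOf γ ν d = ν - j) =
        Finset.univ.filter (fun d => d ∈ Ideal.span {γ ^ (ν - j)}) \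
          Finset.univ.filter (fun d => d ∈ Ideal.span {γ ^ (ν - j + 1)}) := by
      ext d
      simp only [Finset.mem_filter, Finset.mem_univ, true_and, Finset.mem_sdiff,
        Ideal.mem_span_singleton]
      rw [pow_dvd_iff_le_kOf hγ (ν := ν) (m := ν - j) (by omega) d,
        pow_dvd_iff_le_kOf hγ (ν := ν) (m := ν - j + 1) (by omega) d]
      omega
    have hsub : Finset.univ.filter (fun d => d ∈ Ideal.span {γ ^ (ν - j + 1)}) ⊆
        Finset.univ.filter (fun d => d ∈ Ideal.span {γ ^ (ν - j)}) := by
      intro d hd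
      simp only [Finset.mem_filter, Finset.mem_univ, true_and,
        Ideal.mem_span_singleton] at hd ⊢
      rw [pow_dvd_iff_le_kOf hγ (ν := ν) (m := ν - j + 1) (by omega) d] at hd
      rw [pow_dvd_iff_le_kOf hγ (ν := ν) (m := ν - j) (by omega) d]
      omega
    rw [hsplit, Finset.sum_sdiff_eq_sub hsub,
      char_sum_span χ hχ c (ν - j), char_sum_span χ hχ c (ν - j + 1),
      mul_pow_eq_zero_iff hγ hγν hmin c, mul_pow_eq_zero_iff hγ hγν hmin c,
      card_pow_span hγ hγν hmin hν hq (by omega : ν - j ≤ ν),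
      card_pow_span hγ hγν hmin hν hq (by omega : ν - j + 1 ≤ ν), ← hk]
    have e1 : ν - (ν - j) = j := by omega
    have e2 : ν - (ν - j + 1) = j - 1 := by omega
    rw [e1, e2]
    have hc1 : ν ≤ k + (ν - j) ↔ j ≤ k := by omega
    have hc2 : ν ≤ k + (ν - j + 1) ↔ j ≤ k + 1 := by omega
    by_cases h1 : j ≤ k
    · rw [if_pos (hc1.mpr h1), if_pos (hc2.mpr (by omega))]
      rw [if_neg (by omega), if_pos (by omega)]
      push_cast; ring
    · by_cases h2 : j = k + 1
      · rw [if_neg (fun h => h1 (hc1.mp h)), if_pos (hc2.mpr (by omega))]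
        rw [if_neg (by omega), if_neg (by omega), if_pos (by omega)]
        have : j - 1 = ν - (ν - k) := by omega
        rw [this]
        push_cast; ring
      · rw [if_neg (fun h => h1 (hc1.mp h)), if_neg (fun h => (by omega : ¬ j ≤ k + 1) (hc2.mp h))]
        rw [if_neg (by omega), if_neg (by omega), if_neg (by omega)]
        ring
end T
end ChainAux


lemma addchar_sum_eq_prod {A : Type*} [AddCommMonoid A] (χ : AddChar A ℂ)
    {ι : Type*} (s : Finset ι) (f : ι → A) :
    χ (∑ i ∈ s, f i) = ∏ i ∈ s, χ (f i) := by
  induction s using Finset.cons_induction with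
  | empty => simp
  | cons a s ha ih => rw [Finset.sum_cons, Finset.prod_cons, AddChar.map_add_eq_mul, ih]

lemma code_orth {R : Type*} [CommRing R] [Fintype R] (χ : AddChar R ℂ)
    (hχ : ∀ I : Ideal R, (∀ x ∈ I, χ x = 1) → I = ⊥)
    {n : ℕ} (C : Submodule R (Fin n → R)) [Fintype C] (v : Fin n → R) :
    ∑ u : C, χ (∑ ℓ, (u : Fin n → R) ℓ * v ℓ) =
      if v ∈ dualCode C then (Nat.card C : ℂ) else 0 := by
  set φ : C →+ R := AddMonoidHom.mk' (fun u => ∑ ℓ, (u : Fin n → R) ℓ * v ℓ)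
    (fun u w => by
      simp only [Submodule.coe_add, Pi.add_apply, add_mul]
      rw [← Finset.sum_add_distrib]) with hφ
  set ψ : AddChar C ℂ := χ.compAddMonoidHom φ with hψ
  have hψa : ∀ u : C, ψ u = χ (∑ ℓ, (u : Fin n → R) ℓ * v ℓ) := fun u => rfl
  rw [show (∑ u : C, χ (∑ ℓ, (u : Fin n → R) ℓ * v ℓ)) = ∑ u : C, ψ u from
    Finset.sum_congr rfl fun u _ => (hψa u).symm]
  rw [AddChar.sum_eq_ite ψ]
  have hcond : ψ = 0 ↔ v ∈ dualCode C := by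
    rw [AddChar.eq_zero_iff]
    constructor
    · intro h u hu
      have hall : ∀ r : R, χ (r * ∑ ℓ, u ℓ * v ℓ) = 1 := by
        intro r
        have h1 := h (r • (⟨u, hu⟩ : C))
        rw [hψa] at h1
        have h2 : ∑ ℓ, ((r • (⟨u, hu⟩ : C) : C) : Fin n → R) ℓ * v ℓ
            = r * ∑ ℓ, u ℓ * v ℓ := by
          rw [Finset.mul_sum]
          apply Finset.sum_congr rfl
          intro ℓ _
          simp only [SetLike.val_smul, Pi.smul_apply, smul_eq_mul]
          ring
        rwa [h2] at h1
      have hbot : Ideal.span {∑ ℓ, u ℓ * v ℓ} = ⊥ := by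
        apply hχ
        intro y hy
        obtain ⟨t, rfl⟩ := Ideal.mem_span_singleton.mp hy
        rw [mul_comm]
        exact hall t
      exact Ideal.span_singleton_eq_bot.mp hbot
    · intro hv u
      rw [hψa, hv u u.2, AddChar.map_zero_eq_one]
  rw [Nat.card_eq_fintype_card]
  split_ifs with h1 h2 h2
  · rfl
  · exact absurd (hcond.mp h1) h2
  · exact absurd (hcond.mpr h2) h1
  · rfl

lemma prod_pow_card {M : Type*} [CommMonoid M] {n ν : ℕ}
    (t : Fin n → Fin (ν + 1)) (g : Fin (ν + 1) → M) :
    ∏ i, g i ^ (Finset.univ.filter fun ℓ => t ℓ = i).card = ∏ ℓ, g (t ℓ) := by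
  rw [← Finset.prod_fiberwise' Finset.univ t g]
  exact Finset.prod_congr rfl fun i _ => (Finset.prod_const (g i)).symm


section MainAux
set_option linter.unusedSectionVars false
variable {R : Type*} [CommRing R] [Fintype R] [IsLocalRing R] {γ : R} {ν : ℕ}

/-- the type index of an element -/
noncomputable def tIdx (γ : R) (ν : ℕ) (d : R) : Fin (ν + 1) :=
  ⟨ν - kOf γ ν d, by omega⟩

lemma tIdx_val (d : R) : ((tIdx γ ν d : Fin (ν + 1)) : ℕ) = ν - kOf γ ν d := rfl

variable (hγ : IsLocalRing.maximalIdeal R = Ideal.span {γ})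
    (hγν : γ ^ ν = 0)
    (hmin : ∀ m : ℕ, 0 < m → γ ^ m = 0 → ν ≤ m)
    (hν : 0 < ν) {q : ℕ}
    (hq : q = Nat.card (R ⧸ IsLocalRing.maximalIdeal R))
    (χ : AddChar R ℂ)
    (hχ : ∀ I : Ideal R, (∀ x ∈ I, χ x = 1) → I = ⊥)

include hγ hγν hmin in
lemma swc_eq_card {n : ℕ} (c : Fin n → R) (i : Fin (ν + 1)) :
    swc (fun i : Fin (ν + 1) => γ ^ (ν - (i : ℕ))) c i =
      (Finset.univ.filter fun ℓ => tIdx γ ν (c ℓ) = i).card := by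
  rw [swc, Nat.card_eq_fintype_card, Fintype.card_subtype]
  congr 1
  apply Finset.filter_congr
  intro ℓ _
  rw [span_eq_iff_kOf hγ hγν hmin (by omega : ν - (i : ℕ) ≤ ν)]
  have hkle := kOf_le (γ := γ) (ν := ν) (c ℓ)
  have hi : (i : ℕ) ≤ ν := Nat.lt_succ_iff.mp i.isLt
  rw [Fin.ext_iff, tIdx_val]
  omega

include hγ hγν hmin hν hq hχ in
lemma key_local (S : Matrix (Fin (ν + 1)) (Fin (ν + 1)) ℂ)
    (hS : ∀ i j : Fin (ν + 1), S i j =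
      if (j : ℕ) = 0 then 1
      else if (j : ℕ) ≤ ν - (i : ℕ) then (q : ℂ) ^ (j : ℕ) - (q : ℂ) ^ ((j : ℕ) - 1)
      else if (j : ℕ) = ν + 1 - (i : ℕ) then -(q : ℂ) ^ (ν - (i : ℕ))
      else 0) (c : R) :
    ∑ d : R, MvPolynomial.C (χ (c * d)) * MvPolynomial.X (tIdx γ ν d) =
      ∑ j : Fin (ν + 1), MvPolynomial.C (S (tIdx γ ν c) j) * MvPolynomial.X j := by
  rw [← Finset.sum_fiberwise Finset.univ (fun d => tIdx γ ν d)
    (fun d => MvPolynomial.C (χ (c * d)) * MvPolynomial.X (tIdx γ ν d))]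
  apply Finset.sum_congr rfl
  intro j _
  have hstep : ∑ d ∈ Finset.univ.filter (fun d => tIdx γ ν d = j),
        MvPolynomial.C (χ (c * d)) * MvPolynomial.X (tIdx γ ν d)
      = (∑ d ∈ Finset.univ.filter (fun d => tIdx γ ν d = j), χ (c * d)) •
          MvPolynomial.X j := by
    rw [Finset.sum_smul]
    apply Finset.sum_congr rfl
    intro d hd
    rw [(Finset.mem_filter.mp hd).2, MvPolynomial.smul_eq_C_mul]
  rw [hstep]
  have hfilter : Finset.univ.filter (fun d => tIdx γ ν d = j) =
      Finset.univ.filter (fun d => kOf γ ν d = ν - (j : ℕ)) := by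
    apply Finset.filter_congr
    intro d _
    have hkle := kOf_le (γ := γ) (ν := ν) d
    have hj : (j : ℕ) ≤ ν := by omega
    rw [Fin.ext_iff, tIdx_val]
    omega
  rw [hfilter, char_sum_T (χ := χ) (hγ := hγ) (hγν := hγν) (hmin := hmin) (hν := hν)
      (hq := hq) (hχ := hχ) (c := c) (hj := (Nat.lt_succ_iff.mp j.isLt : (j : ℕ) ≤ ν)),
    hS (tIdx γ ν c) j, tIdx_val, MvPolynomial.smul_eq_C_mul]

lemma sum_univ_congr {α M : Type*} [AddCommMonoid M] (i1 i2 : Fintype α)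
    (f g : α → M) (h : ∀ a, f a = g a) :
    (@Finset.univ α i1).sum f = (@Finset.univ α i2).sum g := by
  have : i1 = i2 := Subsingleton.elim i1 i2
  subst this
  exact Finset.sum_congr rfl fun a _ => h a

end MainAux

/-- MacWilliams identity for the symmetrized weight enumerator
over a finite commutative chain ring, with representatives `a_i = γ^(ν − i)`;
the character sums `s_{ij} = ∑_{r ∈ γ^{ν−j}R^×} χ(r γ^{ν−i})` take the stated
explicit values and `swe_{C⊥}(x) = (1/|C|) swe_C(Sx)`. -/
theorem stmt11 {R : Type*} [CommRing R] [Fintype R] [IsLocalRing R]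
    (hchain : ∀ I J : Ideal R, I ≤ J ∨ J ≤ I)
    (γ : R) (hγ : IsLocalRing.maximalIdeal R = Ideal.span {γ})
    (ν : ℕ) (hν : 0 < ν) (hγν : γ ^ ν = 0)
    (hmin : ∀ m : ℕ, 0 < m → γ ^ m = 0 → ν ≤ m)
    (q : ℕ) (hq : q = Nat.card (R ⧸ IsLocalRing.maximalIdeal R))
    (χ : AddChar R ℂ)
    (hχ : ∀ I : Ideal R, (∀ x ∈ I, χ x = 1) → I = ⊥)
    {n : ℕ} (C : Submodule R (Fin n → R))
    (S : Matrix (Fin (ν + 1)) (Fin (ν + 1)) ℂ)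
    (hS : ∀ i j : Fin (ν + 1), S i j =
      if (j : ℕ) = 0 then 1
      else if (j : ℕ) ≤ ν - (i : ℕ) then (q : ℂ) ^ (j : ℕ) - (q : ℂ) ^ ((j : ℕ) - 1)
      else if (j : ℕ) = ν + 1 - (i : ℕ) then -(q : ℂ) ^ (ν - (i : ℕ))
      else 0) :
    (∀ i j : Fin (ν + 1), S i j =
      ∑ r : R, if ∃ u : Rˣ, r = γ ^ (ν - (j : ℕ)) * (u : R)
        then χ (r * γ ^ (ν - (i : ℕ))) else 0) ∧
    swe (fun i : Fin (ν + 1) => γ ^ (ν - (i : ℕ))) (dualCode C) =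
      MvPolynomial.C ((Nat.card C : ℂ)⁻¹) *
        (MvPolynomial.bind₁ (fun i : Fin (ν + 1) =>
          ∑ j : Fin (ν + 1), MvPolynomial.C (S i j) * X j))
          (swe (fun i : Fin (ν + 1) => γ ^ (ν - (i : ℕ))) C) := by
  classical
  haveI fC : Fintype C := Fintype.ofFinite C
  haveI fD : Fintype (dualCode C) := Fintype.ofFinite (dualCode C)
  -- notation
  set t : R → Fin (ν + 1) := fun d => tIdx γ ν d with ht
  have part1 : ∀ i j : Fin (ν + 1), S i j =
      ∑ r : R, if ∃ u : Rˣ, r = γ ^ (ν - (j : ℕ)) * (u : R)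
        then χ (r * γ ^ (ν - (i : ℕ))) else 0 := by
    intro i j
    have hi : (i : ℕ) ≤ ν := Nat.lt_succ_iff.mp i.isLt
    have hj : (j : ℕ) ≤ ν := Nat.lt_succ_iff.mp j.isLt
    have hpred : ∀ r : R,
        (∃ u : Rˣ, r = γ ^ (ν - (j : ℕ)) * (u : R)) ↔ kOf γ ν r = ν - (j : ℕ) := by
      intro r
      constructor
      · exact fun h => kOf_unique hγ hγν hmin (by omega) h
      · intro h
        obtain ⟨w, hw⟩ := kOf_spec hγ hγν hmin r
        rw [h] at hw
        exact ⟨w, hw⟩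
    have e1 : (∑ r : R, if ∃ u : Rˣ, r = γ ^ (ν - (j : ℕ)) * (u : R)
          then χ (r * γ ^ (ν - (i : ℕ))) else 0)
        = ∑ r ∈ Finset.univ.filter (fun r => kOf γ ν r = ν - (j : ℕ)),
            χ (γ ^ (ν - (i : ℕ)) * r) := by
      rw [Finset.sum_filter]
      apply Finset.sum_congr rfl
      intro r _
      by_cases h : kOf γ ν r = ν - (j : ℕ)
      · rw [if_pos h, if_pos ((hpred r).mpr h), mul_comm]
      · rw [if_neg h, if_neg (fun hh => h ((hpred r).mp hh))]
    rw [e1, char_sum_T (χ := χ) (hγ := hγ) (hγν := hγν) (hmin := hmin) (hν := hν)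
        (hq := hq) (hχ := hχ) (c := γ ^ (ν - (i : ℕ))) (hj := hj),
      kOf_pow hγ hγν hmin (by omega : ν - (i : ℕ) ≤ ν), hS]
    have e3 : ν - (ν - (i : ℕ)) = (i : ℕ) := by omega
    rw [e3]
  refine ⟨part1, ?_⟩
  -- main identity
  have hNC : ((Nat.card C : ℂ)) ≠ 0 := Nat.cast_ne_zero.mpr Nat.card_pos.ne'
  set a : Fin (ν + 1) → R := fun i : Fin (ν + 1) => γ ^ (ν - (i : ℕ)) with ha
  set F : R → MvPolynomial (Fin (ν + 1)) ℂ :=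
    fun d => ∑ j : Fin (ν + 1), MvPolynomial.C (S (t d) j) * MvPolynomial.X j with hF
  have keyg : ∀ (g : Fin (ν + 1) → MvPolynomial (Fin (ν + 1)) ℂ) (c : Fin n → R),
      ∏ i, g i ^ swc a c i = ∏ ℓ, g (t (c ℓ)) := by
    intro g c
    have h1 : ∀ i, swc a c i = (Finset.univ.filter fun ℓ => t (c ℓ) = i).card := by
      intro i
      exact swc_eq_card hγ hγν hmin c i
    calc ∏ i, g i ^ swc a c i
        = ∏ i, g i ^ (Finset.univ.filter fun ℓ => t (c ℓ) = i).card := by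
          apply Finset.prod_congr rfl; intro i _; rw [h1 i]
      _ = ∏ ℓ, g (t (c ℓ)) := prod_pow_card (fun ℓ => t (c ℓ)) g
  -- the middle quantity
  set M : MvPolynomial (Fin (ν + 1)) ℂ :=
    ∑ v : Fin n → R,
      MvPolynomial.C (∑ u : C, χ (∑ ℓ, (u : Fin n → R) ℓ * v ℓ)) *
        ∏ ℓ, MvPolynomial.X (t (v ℓ)) with hM
  have hM1 : M = MvPolynomial.C ((Nat.card C : ℂ)) *
      ∑ v : dualCode C, ∏ ℓ, MvPolynomial.X (t ((v : Fin n → R) ℓ)) := by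
    rw [hM]
    calc (∑ v : Fin n → R,
        MvPolynomial.C (∑ u : C, χ (∑ ℓ, (u : Fin n → R) ℓ * v ℓ)) *
          ∏ ℓ, MvPolynomial.X (t (v ℓ)))
        = ∑ v ∈ Finset.univ.filter (fun v : Fin n → R => v ∈ dualCode C),
            MvPolynomial.C ((Nat.card C : ℂ)) * ∏ ℓ, MvPolynomial.X (t (v ℓ)) := by
          rw [Finset.sum_filter]
          apply Finset.sum_congr rfl
          intro v _
          rw [code_orth χ hχ C v]
          by_cases h : v ∈ dualCode C
          · rw [if_pos h, if_pos h]
          · rw [if_neg h, if_neg h, map_zero, zero_mul]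
      _ = ∑ v : dualCode C, MvPolynomial.C ((Nat.card C : ℂ)) *
            ∏ ℓ, MvPolynomial.X (t ((v : Fin n → R) ℓ)) := by
          rw [Finset.sum_subtype (Finset.univ.filter (fun v : Fin n → R => v ∈ dualCode C))
            (p := fun v => v ∈ dualCode C) (by simp)
            (fun v => MvPolynomial.C ((Nat.card C : ℂ)) * ∏ ℓ, MvPolynomial.X (t (v ℓ)))]
      _ = MvPolynomial.C ((Nat.card C : ℂ)) *
            ∑ v : dualCode C, ∏ ℓ, MvPolynomial.X (t ((v : Fin n → R) ℓ)) := by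
          rw [Finset.mul_sum]
  have hM2 : M = ∑ u : C, ∏ ℓ, F ((u : Fin n → R) ℓ) := by
    rw [hM]
    calc (∑ v : Fin n → R,
        MvPolynomial.C (∑ u : C, χ (∑ ℓ, (u : Fin n → R) ℓ * v ℓ)) *
          ∏ ℓ, MvPolynomial.X (t (v ℓ)))
        = ∑ v : Fin n → R, ∑ u : C,
            MvPolynomial.C (χ (∑ ℓ, (u : Fin n → R) ℓ * v ℓ)) *
              ∏ ℓ, MvPolynomial.X (t (v ℓ)) := by
          apply Finset.sum_congr rfl
          intro v _
          rw [map_sum, Finset.sum_mul]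
      _ = ∑ u : C, ∑ v : Fin n → R,
            MvPolynomial.C (χ (∑ ℓ, (u : Fin n → R) ℓ * v ℓ)) *
              ∏ ℓ, MvPolynomial.X (t (v ℓ)) := Finset.sum_comm
      _ = ∑ u : C, ∑ v : Fin n → R,
            ∏ ℓ, (MvPolynomial.C (χ ((u : Fin n → R) ℓ * v ℓ)) *
              MvPolynomial.X (t (v ℓ))) := by
          apply Finset.sum_congr rfl
          intro u _
          apply Finset.sum_congr rfl
          intro v _
          rw [addchar_sum_eq_prod χ Finset.univ (fun ℓ => (u : Fin n → R) ℓ * v ℓ),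
            map_prod, Finset.prod_mul_distrib]
      _ = ∑ u : C, ∏ ℓ, ∑ d : R,
            MvPolynomial.C (χ ((u : Fin n → R) ℓ * d)) * MvPolynomial.X (t d) := by
          apply Finset.sum_congr rfl
          intro u _
          rw [Finset.prod_univ_sum]
          rw [← Fintype.piFinset_univ]
      _ = ∑ u : C, ∏ ℓ, F ((u : Fin n → R) ℓ) := by
          apply Finset.sum_congr rfl
          intro u _
          apply Finset.prod_congr rfl
          intro ℓ _
          rw [hF]
          exact key_local hγ hγν hmin hν hq χ hχ S hS ((u : Fin n → R) ℓ)
  -- unfold swe on both sides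
  have hdual : swe a (dualCode C) =
      ∑ v : dualCode C, ∏ ℓ, MvPolynomial.X (t ((v : Fin n → R) ℓ)) := by
    rw [swe]
    exact sum_univ_congr _ _ _ _
      (fun v => keyg (fun i => MvPolynomial.X i) (v : Fin n → R))
  have hbind : (MvPolynomial.bind₁ (fun i : Fin (ν + 1) =>
        ∑ j : Fin (ν + 1), MvPolynomial.C (S i j) * MvPolynomial.X j)) (swe a C)
      = ∑ u : C, ∏ ℓ, F ((u : Fin n → R) ℓ) := by
    rw [swe, map_sum]
    refine sum_univ_congr _ _ _ _ (fun u => ?_)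
    rw [map_prod]
    calc ∏ i, (MvPolynomial.bind₁ (fun i : Fin (ν + 1) =>
          ∑ j : Fin (ν + 1), MvPolynomial.C (S i j) * MvPolynomial.X j))
            (MvPolynomial.X i ^ swc a (u : Fin n → R) i)
        = ∏ i, (∑ j : Fin (ν + 1), MvPolynomial.C (S i j) * MvPolynomial.X j)
            ^ swc a (u : Fin n → R) i := by
          apply Finset.prod_congr rfl
          intro i _
          rw [map_pow, MvPolynomial.bind₁_X_right]
      _ = ∏ ℓ, F ((u : Fin n → R) ℓ) := by
          rw [keyg (fun i => ∑ j : Fin (ν + 1),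
            MvPolynomial.C (S i j) * MvPolynomial.X j) (u : Fin n → R)]
  rw [hdual, hbind, ← hM2, hM1, ← mul_assoc, ← map_mul, inv_mul_cancel₀ hNC,
    MvPolynomial.C_1, one_mul]


end
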